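/- Relative operator entropy bounds for matrices: let A be positive definite, B positive definite with mA ≤ B ≤ MA, 0 < m < M. Then L̃(A|B) - (1/(2M²))·K(A,B) ≤ S(A|B) ≤ L̃(A|B) - (1/(2m²))·K(A,B) in the Loewner order, where S(A|B) = A^{1/2} log(A^{-1/2}BA^{-1/2}) A^{1/2}, K(A,B) = A♮₂B + MmA - (M+m)B, and L̃(A|B) = ((B - mA)log M + (MA - B)log m)/(M-m). -/

import Mathlib

open Matrix ComplexOrder
noncomputable def Matrix.PosSemidef.sqrt {n : Type*} [Fintype n] [DecidableEq n] {𝕜 : Type*}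
    [RCLike 𝕜] {A : Matrix n n 𝕜} (hA : A.PosSemidef) : Matrix n n 𝕜 :=
  hA.1.eigenvectorUnitary.1 * diagonal ((↑) ∘ (√·) ∘ hA.1.eigenvalues) *
  (star hA.1.eigenvectorUnitary : Matrix n n 𝕜)
lemma sqrt_facts {n : ℕ} {A : Matrix (Fin n) (Fin n) ℂ} (hA : A.PosSemidef) :
    hA.sqrt.PosSemidef ∧ hA.sqrt * hA.sqrt = A := by
  set U : Matrix (Fin n) (Fin n) ℂ := ↑(hA.1.eigenvectorUnitary) with hU
  have hUU : star U * U = 1 := (Matrix.mem_unitaryGroup_iff').mp hA.1.eigenvectorUnitary.2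
  have hd : (diagonal ((↑) ∘ (√·) ∘ hA.1.eigenvalues) : Matrix (Fin n) (Fin n) ℂ).PosSemidef :=
    PosSemidef.diagonal (fun i => by simp [Complex.zero_le_real, Real.sqrt_nonneg])
  constructor
  · have := hd.mul_mul_conjTranspose_same U
    simpa [Matrix.PosSemidef.sqrt, hU, star_eq_conjTranspose] using this
  · conv_rhs => rw [hA.1.spectral_theorem]
    simp only [Unitary.conjStarAlgAut_apply, Matrix.PosSemidef.sqrt, ← hU, Matrix.mul_assoc]
    rw [← Matrix.mul_assoc (star U) U, hUU, Matrix.one_mul, ← Matrix.mul_assoc (diagonal _), diagonal_mul_diagonal]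
    congr 3
    funext i
    simp only [Function.comp_apply]
    exact_mod_cast congrArg Complex.ofReal (Real.mul_self_sqrt (hA.eigenvalues_nonneg i))

lemma aux_concave_nonneg (α p q c m M : ℝ) (hm : 0 < m) (hmM : m < M)
    (h'' : ∀ x ∈ Set.Ioo m M, α * (-(x ^ 2)⁻¹) + 2 * c ≤ 0)
    (h1 : α * Real.log m + p * m + q + c * m ^ 2 = 0)
    (h2 : α * Real.log M + p * M + q + c * M ^ 2 = 0) :
    ∀ x ∈ Set.Icc m M, 0 ≤ α * Real.log x + p * x + q + c * x ^ 2 := by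
  have hint : interior (Set.Icc m M) = Set.Ioo m M := interior_Icc
  have hpos : ∀ x ∈ Set.Icc m M, (0:ℝ) < x := fun x hx => lt_of_lt_of_le hm hx.1
  have hcont : ContinuousOn (fun x : ℝ => α * Real.log x + p * x + q + c * x ^ 2)
      (Set.Icc m M) := by
    intro x hx
    exact (((continuousAt_const.mul (Real.continuousAt_log (hpos x hx).ne')).add
      (by fun_prop)).add continuousAt_const |>.add (by fun_prop)).continuousWithinAt
  have hconc : ConcaveOn ℝ (Set.Icc m M)
      (fun x : ℝ => α * Real.log x + p * x + q + c * x ^ 2) := by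
    apply concaveOn_of_hasDerivWithinAt2_nonpos (convex_Icc m M) hcont
      (f' := fun x => α * x⁻¹ + p + 2 * c * x)
      (f'' := fun x => α * (-(x ^ 2)⁻¹) + 2 * c)
    · intro x hx
      rw [hint] at hx
      have hx0 : x ≠ 0 := (lt_trans hm hx.1).ne'
      have : HasDerivAt (fun x : ℝ => α * Real.log x + p * x + q + c * x ^ 2)
          (α * x⁻¹ + p + 2 * c * x) x := by
        have := ((((Real.hasDerivAt_log hx0).const_mul α).add
          ((hasDerivAt_id x).const_mul p)).add (hasDerivAt_const x q)).add
          ((hasDerivAt_pow 2 x).const_mul c)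
        refine this.congr_deriv ?_
        ring
      exact this.hasDerivWithinAt
    · intro x hx
      rw [hint] at hx
      have hx0 : x ≠ 0 := (lt_trans hm hx.1).ne'
      have : HasDerivAt (fun x : ℝ => α * x⁻¹ + p + 2 * c * x)
          (α * (-(x ^ 2)⁻¹) + 2 * c) x := by
        have := (((hasDerivAt_inv hx0).const_mul α).add (hasDerivAt_const x p)).add
          ((hasDerivAt_id x).const_mul (2 * c))
        refine this.congr_deriv ?_
        ring
      exact this.hasDerivWithinAt
    · intro x hx
      rw [hint] at hx
      exact h'' x hx
  intro x hx
  have hMm : (0:ℝ) < M - m := sub_pos.2 hmM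
  have ht : 0 ≤ (M - x) / (M - m) := div_nonneg (by linarith [hx.2]) hMm.le
  have hs : 0 ≤ (x - m) / (M - m) := div_nonneg (by linarith [hx.1]) hMm.le
  have hts : (M - x) / (M - m) + (x - m) / (M - m) = 1 := by field_simp; ring
  have hxx : (M - x) / (M - m) * m + (x - m) / (M - m) * M = x := by
    field_simp
    ring
  have := hconc.2 (Set.left_mem_Icc.2 hmM.le) (Set.right_mem_Icc.2 hmM.le) ht hs hts
  simp only [smul_eq_mul, h1, h2, mul_zero, add_zero, hxx] at this
  exact this

lemma scalar_one (m M x : ℝ) (hm : 0 < m) (hmM : m < M) (hx : x ∈ Set.Icc m M) :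
    0 ≤ Real.log x - ((M - m)⁻¹ * (Real.log M * (x - m) + Real.log m * (M - x))
      - 1 / (2 * M ^ 2) * (x ^ 2 + M * m - (M + m) * x)) := by
  have hMm : M - m ≠ 0 := sub_ne_zero.2 hmM.ne'
  have hM0 : (0:ℝ) < M := lt_trans hm hmM
  have key := aux_concave_nonneg 1
    (-((M - m)⁻¹ * (Real.log M - Real.log m)) - 1 / (2 * M ^ 2) * (M + m))
    (-((M - m)⁻¹ * (M * Real.log m - m * Real.log M)) + 1 / (2 * M ^ 2) * (M * m))
    (1 / (2 * M ^ 2)) m M hm hmM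
    (by
      intro y hy
      have hy0 : 0 < y := lt_trans hm hy.1
      have h1 : (M ^ 2)⁻¹ ≤ (y ^ 2)⁻¹ := by
        apply inv_anti₀ (by positivity)
        nlinarith [hy.2]
      have : 2 * (1 / (2 * M ^ 2)) = (M ^ 2)⁻¹ := by field_simp
      linarith)
    (by field_simp; ring)
    (by field_simp; ring)
  have := key x hx
  nlinarith [this]

lemma scalar_two (m M x : ℝ) (hm : 0 < m) (hmM : m < M) (hx : x ∈ Set.Icc m M) :
    0 ≤ ((M - m)⁻¹ * (Real.log M * (x - m) + Real.log m * (M - x))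
      - 1 / (2 * m ^ 2) * (x ^ 2 + M * m - (M + m) * x)) - Real.log x := by
  have hMm : M - m ≠ 0 := sub_ne_zero.2 hmM.ne'
  have key := aux_concave_nonneg (-1)
    ((M - m)⁻¹ * (Real.log M - Real.log m) + 1 / (2 * m ^ 2) * (M + m))
    ((M - m)⁻¹ * (M * Real.log m - m * Real.log M) - 1 / (2 * m ^ 2) * (M * m))
    (-(1 / (2 * m ^ 2))) m M hm hmM
    (by
      intro y hy
      have hy0 : 0 < y := lt_trans hm hy.1
      have h1 : (y ^ 2)⁻¹ ≤ (m ^ 2)⁻¹ := by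
        apply inv_anti₀ (by positivity)
        nlinarith [hy.1]
      have : 2 * (1 / (2 * m ^ 2)) = (m ^ 2)⁻¹ := by field_simp
      linarith)
    (by field_simp; ring)
    (by field_simp; ring)
  have := key x hx
  nlinarith [this]

set_option maxHeartbeats 1000000 in
/-- Relative operator entropy bounds: let `A`, `B` be positive definite with
`m • A ≤ B ≤ M • A` in the Loewner order, `0 < m < M`.  With
`S(A|B) = √A · log(√A⁻¹ B √A⁻¹) · √A`, `A ♮₂ B = √A · (√A⁻¹ B √A⁻¹)² · √A`,
`K(A,B) = A ♮₂ B + M m A - (M+m) B` and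
`L̃(A|B) = ((B - m A) log M + (M A - B) log m)/(M - m)`, one has
`L̃(A|B) - (1/(2M²)) K(A,B) ≤ S(A|B) ≤ L̃(A|B) - (1/(2m²)) K(A,B)` in the Loewner
order. -/

theorem relative_operator_entropy_bounds {n : ℕ} (A B : Matrix (Fin n) (Fin n) ℂ)
    (hA : A.PosDef) (hB : B.PosDef) (m M : ℝ) (hm : 0 < m) (hmM : m < M)
    (hmA : (B - m • A).PosSemidef) (hMA : (M • A - B).PosSemidef) :
    let S := hA.posSemidef.sqrt
    let C := S⁻¹ * B * S⁻¹
    let Sent := S * cfc Real.log C * S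
    let K := S * C ^ 2 * S + (M * m) • A - (M + m) • B
    let L := (M - m)⁻¹ • (Real.log M • (B - m • A) + Real.log m • (M • A - B))
    (Sent - (L - (1 / (2 * M ^ 2)) • K)).PosSemidef ∧
      ((L - (1 / (2 * m ^ 2)) • K) - Sent).PosSemidef := by
  intro S C Sent K L
  have hSsd : S.PosSemidef := (sqrt_facts hA.posSemidef).1
  have hSh : S.IsHermitian := hSsd.1
  have hAS : S * S = A := (sqrt_facts hA.posSemidef).2
  have hdet : IsUnit S.det := by
    rw [isUnit_iff_ne_zero]
    have hdA : A.det ≠ 0 := hA.det_pos.ne'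
    rw [← hAS, det_mul] at hdA
    exact fun h => hdA (by rw [h, mul_zero])
  have hS1 : S * S⁻¹ = 1 := mul_nonsing_inv S hdet
  have hS1' : S⁻¹ * S = 1 := nonsing_inv_mul S hdet
  have hSih : S⁻¹.IsHermitian := hSh.inv
  have hCh : C.IsHermitian := by
    show ((S⁻¹ * B * S⁻¹)ᴴ = S⁻¹ * B * S⁻¹)
    rw [conjTranspose_mul, conjTranspose_mul, hSih.eq, hB.1.eq, mul_assoc]
  set μ := hCh.eigenvalues with hμ
  set U : Matrix (Fin n) (Fin n) ℂ := ↑(hCh.eigenvectorUnitary) with hU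
  set D : Matrix (Fin n) (Fin n) ℂ := diagonal (RCLike.ofReal ∘ μ) with hD
  have hUU : U * star U = 1 := (Matrix.mem_unitaryGroup_iff).mp hCh.eigenvectorUnitary.2
  have hU'U : star U * U = 1 := (Matrix.mem_unitaryGroup_iff').mp hCh.eigenvectorUnitary.2
  have hspec : C = U * D * star U := hCh.spectral_theorem
  have hBC : B = S * C * S := by
    show B = S * (S⁻¹ * B * S⁻¹) * S
    rw [← mul_assoc, ← mul_assoc, hS1, one_mul, mul_assoc, hS1', mul_one]
  set N : Matrix (Fin n) (Fin n) ℂ := S * U with hN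
  set NH : Matrix (Fin n) (Fin n) ℂ := star U * S with hNH
  have hNconj : Nᴴ = NH := by
    rw [hN, hNH, conjTranspose_mul, hSh.eq, star_eq_conjTranspose]
  set φ : Matrix (Fin n) (Fin n) ℂ →ₗ[ℝ] Matrix (Fin n) (Fin n) ℂ :=
    (LinearMap.mulRight ℝ NH).comp (LinearMap.mulLeft ℝ N) with hφdef
  have hφ : ∀ X, φ X = N * X * NH := fun X => rfl
  have hsUU : ∀ X : Matrix (Fin n) (Fin n) ℂ, star U * (U * X) = X := by
    intro X; rw [← mul_assoc, hU'U, one_mul]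
  have hA2 : φ 1 = A := by
    rw [hφ, mul_one, hN, hNH, mul_assoc, ← mul_assoc U, hUU, one_mul, hAS]
  have hB2 : φ D = B := by
    rw [hφ, hBC, hspec, hN, hNH]
    simp only [Matrix.mul_assoc]
  have hC2S : φ (D * D) = S * C ^ 2 * S := by
    rw [hφ, pow_two, hspec, hN, hNH]
    simp only [Matrix.mul_assoc, hsUU]
  have hSent : φ (diagonal (RCLike.ofReal ∘ Real.log ∘ μ)) = Sent := by
    show _ = S * cfc Real.log C * S
    rw [hCh.cfc_eq, Matrix.IsHermitian.cfc, hφ, hN, hNH]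
    simp only [Matrix.mul_assoc, Unitary.conjStarAlgAut_apply]
    rfl
  have hK : φ (D * D + (M * m) • 1 - (M + m) • D) = K := by
    show _ = S * C ^ 2 * S + (M * m) • A - (M + m) • B
    rw [map_sub, map_add, _root_.map_smul, _root_.map_smul, hC2S, hA2, hB2]
  have hL : φ ((M - m)⁻¹ • (Real.log M • (D - m • 1) + Real.log m • (M • 1 - D))) = L := by
    show _ = (M - m)⁻¹ • (Real.log M • (B - m • A) + Real.log m • (M • A - B))
    rw [_root_.map_smul, map_add, _root_.map_smul, _root_.map_smul, map_sub, map_sub, _root_.map_smul, _root_.map_smul,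
      hB2, hA2]
  have hpsd' : ∀ e : Fin n → ℂ, (∀ i, 0 ≤ e i) → (φ (diagonal e)).PosSemidef := by
    intro e he
    have h1 : (diagonal e).PosSemidef := PosSemidef.diagonal he
    have h2 := h1.mul_mul_conjTranspose_same N
    rwa [hNconj, ← hφ] at h2
  have hASi : S⁻¹ * A * S⁻¹ = 1 := by
    rw [← hAS, ← mul_assoc, hS1', one_mul, hS1]
  have hCm : (C - m • (1 : Matrix (Fin n) (Fin n) ℂ)).PosSemidef := by
    have h := hmA.conjTranspose_mul_mul_same S⁻¹
    have heq : (S⁻¹)ᴴ * (B - m • A) * S⁻¹ = C - m • 1 := by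
      simp only [hSih.eq, Matrix.mul_sub, Matrix.sub_mul, mul_smul_comm, smul_mul_assoc, hASi]
      rfl
    rwa [heq] at h
  have hCM : ((M : ℝ) • (1 : Matrix (Fin n) (Fin n) ℂ) - C).PosSemidef := by
    have h := hMA.conjTranspose_mul_mul_same S⁻¹
    have heq : (S⁻¹)ᴴ * (M • A - B) * S⁻¹ = M • 1 - C := by
      simp only [hSih.eq, Matrix.mul_sub, Matrix.sub_mul, mul_smul_comm, smul_mul_assoc, hASi]
      rfl
    rwa [heq] at h
  have hvv : ∀ i, dotProduct (star ⇑(hCh.eigenvectorBasis i)) ⇑(hCh.eigenvectorBasis i)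
      = 1 := by
    intro i
    have h1 : (inner ℂ (hCh.eigenvectorBasis i) (hCh.eigenvectorBasis i) : ℂ) = 1 := by
      rw [inner_self_eq_norm_sq_to_K, hCh.eigenvectorBasis.orthonormal.1 i]
      norm_num
    rw [EuclideanSpace.inner_eq_star_dotProduct] at h1
    rw [dotProduct_comm] at h1
    exact h1
  have hlow : ∀ i, m ≤ μ i := by
    intro i
    have h := hCm.dotProduct_mulVec_nonneg ⇑(hCh.eigenvectorBasis i)
    rw [Matrix.sub_mulVec, hCh.mulVec_eigenvectorBasis, Matrix.smul_mulVec,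
      Matrix.one_mulVec, dotProduct_sub, dotProduct_smul, dotProduct_smul,
      hvv i] at h
    simp only [Complex.real_smul, mul_one, ← Complex.ofReal_sub] at h
    have := Complex.zero_le_real.1 h
    linarith
  have hup : ∀ i, μ i ≤ M := by
    intro i
    have h := hCM.dotProduct_mulVec_nonneg ⇑(hCh.eigenvectorBasis i)
    rw [Matrix.sub_mulVec, hCh.mulVec_eigenvectorBasis, Matrix.smul_mulVec,
      Matrix.one_mulVec, dotProduct_sub, dotProduct_smul, dotProduct_smul,
      hvv i] at h
    simp only [Complex.real_smul, mul_one, ← Complex.ofReal_sub] at h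
    have := Complex.zero_le_real.1 h
    linarith
  have hdiag : ∀ c : ℝ,
      diagonal (RCLike.ofReal ∘ Real.log ∘ μ) -
        ((M - m)⁻¹ • (Real.log M • (D - m • 1) + Real.log m • (M • 1 - D)) -
          c • (D * D + (M * m) • 1 - (M + m) • D)) =
      diagonal (fun i => Complex.ofReal (Real.log (μ i) -
        ((M - m)⁻¹ * (Real.log M * (μ i - m) + Real.log m * (M - μ i)) -
          c * ((μ i) ^ 2 + M * m - (M + m) * (μ i))))) := by
    intro c
    rw [hD, diagonal_mul_diagonal]
    ext i j
    by_cases h : i = j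
    · subst h
      simp only [Matrix.sub_apply, Matrix.add_apply, Matrix.smul_apply, diagonal_apply_eq,
        Matrix.one_apply_eq, Function.comp_apply, Complex.real_smul, smul_eq_mul, ← RCLike.algebraMap_eq_ofReal, Complex.coe_algebraMap]
      push_cast
      ring
    · simp [diagonal_apply_ne _ h, Matrix.one_apply_ne h, h]
  have hrep : ∀ c : ℝ, Sent - (L - c • K) = φ (diagonal (fun i =>
      Complex.ofReal (Real.log (μ i) -
        ((M - m)⁻¹ * (Real.log M * (μ i - m) + Real.log m * (M - μ i)) -
          c * ((μ i) ^ 2 + M * m - (M + m) * (μ i)))))) := by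
    intro c
    rw [← hSent, ← hL, ← hK, ← _root_.map_smul, ← map_sub, ← map_sub, hdiag c]
  constructor
  · rw [hrep (1 / (2 * M ^ 2))]
    exact hpsd' _ (fun i => Complex.zero_le_real.2 (scalar_one m M (μ i) hm hmM ⟨hlow i, hup i⟩))
  · have h2 : (L - (1 / (2 * m ^ 2)) • K) - Sent = φ (diagonal (fun i =>
        Complex.ofReal (-(Real.log (μ i) -
          ((M - m)⁻¹ * (Real.log M * (μ i - m) + Real.log m * (M - μ i)) -
            1 / (2 * m ^ 2) * ((μ i) ^ 2 + M * m - (M + m) * (μ i))))))) := by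
      rw [← neg_sub Sent (L - (1 / (2 * m ^ 2)) • K), hrep (1 / (2 * m ^ 2)), ← map_neg]
      congr 1
      ext i j
      by_cases h : i = j
      · subst h
        simp [Complex.ofReal_neg]
      · simp [diagonal_apply_ne _ h]
    rw [h2]
    refine hpsd' _ (fun i => Complex.zero_le_real.2 ?_)
    have := scalar_two m M (μ i) hm hmM ⟨hlow i, hup i⟩
    linarith
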